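/- Let X be a compact metric space, f : X → X continuous, I, J, K, L arcs in X with I ⊆ K, L ⊆ J. If I f-covers J, then K f-covers L. -/

import Mathlib

/-- `I` is an arc: a homeomorphic image of `[0,1]`. Since `[0,1]` is compact and `X`
is Hausdorff, a continuous injection suffices. -/
def IsArc {X : Type*} [TopologicalSpace X] (I : Set X) : Prop :=
  ∃ φ : ℝ → X, ContinuousOn φ (Set.Icc 0 1) ∧ Set.InjOn φ (Set.Icc 0 1) ∧
    φ '' Set.Icc 0 1 = I

/-- `I` is a free arc: an arc whose "interior part" is open in `X`. -/
def IsFreeArc {X : Type*} [TopologicalSpace X] (I : Set X) : Prop :=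
  ∃ φ : ℝ → X, ContinuousOn φ (Set.Icc 0 1) ∧ Set.InjOn φ (Set.Icc 0 1) ∧
    φ '' Set.Icc 0 1 = I ∧ IsOpen (φ '' Set.Ioo 0 1)

/-- `I` `h`-covers `J`: some subarc of `I` is mapped exactly onto `J` by `h`. -/
def Covers {X : Type*} [TopologicalSpace X] (h : X → X) (I J : Set X) : Prop :=
  ∃ K : Set X, IsArc K ∧ K ⊆ I ∧ h '' K = J


lemma key1 (G : ℝ → ℝ) (hG : Continuous G) {a b p q : ℝ} (hab : a < b) (hpq : p ≤ q)
    (hp : G p = a) (hq : G q = b) :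
    ∃ u v, u < v ∧ Set.Icc u v ⊆ Set.Icc p q ∧ G '' Set.Icc u v = Set.Icc a b := by
  set A := Set.Icc p q ∩ G ⁻¹' {a} with hA
  have hAc : IsCompact A := isCompact_Icc.inter_right (isClosed_singleton.preimage hG)
  have hAne : A.Nonempty := ⟨p, ⟨le_refl p, hpq⟩, hp⟩
  set u := sSup A with hu
  have huA : u ∈ A := hAc.sSup_mem hAne
  have hGu : G u = a := huA.2
  have hupq : u ∈ Set.Icc p q := huA.1
  set B := Set.Icc u q ∩ G ⁻¹' {b} with hB
  have hBc : IsCompact B := isCompact_Icc.inter_right (isClosed_singleton.preimage hG)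
  have hBne : B.Nonempty := ⟨q, ⟨hupq.2, le_refl q⟩, hq⟩
  set v := sInf B with hv
  have hvB : v ∈ B := hBc.sInf_mem hBne
  have hGv : G v = b := hvB.2
  have huv : u < v :=
    hvB.1.1.lt_of_ne (fun h => hab.ne (by rw [← hGu, h, hGv]))
  refine ⟨u, v, huv, Set.Icc_subset_Icc hupq.1 hvB.1.2, ?_⟩
  apply Set.Subset.antisymm
  · rintro z ⟨t, ht, rfl⟩
    constructor
    · by_contra h
      push_neg at h
      have htu : u < t := lt_of_le_of_ne ht.1 (by rintro rfl; exact absurd hGu (by linarith))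
      have : a ∈ G '' Set.Icc t v :=
        intermediate_value_Icc ht.2 hG.continuousOn ⟨h.le, by rw [hGv]; exact hab.le⟩
      obtain ⟨s, hs, hsa⟩ := this
      have hsA : s ∈ A := ⟨⟨hupq.1.trans (htu.le.trans hs.1), hs.2.trans hvB.1.2⟩, hsa⟩
      have : s ≤ u := le_csSup hAc.bddAbove hsA
      linarith [hs.1]
    · by_contra h
      push_neg at h
      have htv : t < v := lt_of_le_of_ne ht.2 (by rintro rfl; exact absurd hGv (by linarith))
      have : b ∈ G '' Set.Icc u t :=
        intermediate_value_Icc ht.1 hG.continuousOn ⟨by rw [hGu]; exact hab.le, h.le⟩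
      obtain ⟨s, hs, hsb⟩ := this
      have hsB : s ∈ B := ⟨⟨hs.1, (hs.2.trans htv.le).trans hvB.1.2⟩, hsb⟩
      have : v ≤ s := csInf_le hBc.bddBelow hsB
      linarith [hs.2]
  · have := intermediate_value_Icc huv.le hG.continuousOn
    rwa [hGu, hGv] at this

lemma key (G : ℝ → ℝ) (hG : Continuous G) {a b p q : ℝ} (hab : a < b)
    (hp : G p = a) (hq : G q = b) :
    ∃ u v, u < v ∧ Set.Icc u v ⊆ Set.uIcc p q ∧ G '' Set.Icc u v = Set.Icc a b := by
  rcases le_total p q with hpq | hqp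
  · obtain ⟨u, v, h1, h2, h3⟩ := key1 G hG hab hpq hp hq
    exact ⟨u, v, h1, (Set.uIcc_of_le hpq) ▸ h2, h3⟩
  · set H : ℝ → ℝ := fun t => G (p + q - t) with hH
    have hHc : Continuous H := hG.comp (by continuity)
    have hHq : H q = a := by simp [hH, hp]
    have hHp : H p = b := by simp [hH, hq]
    obtain ⟨u, v, h1, h2, h3⟩ := key1 H hHc hab hqp hHq hHp
    have hmem_u := h2 (Set.left_mem_Icc.mpr h1.le)
    have hmem_v := h2 (Set.right_mem_Icc.mpr h1.le)
    refine ⟨p + q - v, p + q - u, by linarith, ?_, ?_⟩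
    · rw [Set.uIcc_of_ge hqp]
      exact Set.Icc_subset_Icc (by linarith [hmem_v.2]) (by linarith [hmem_u.1])
    · have himg : (fun t => p + q - t) '' Set.Icc u v = Set.Icc (p + q - v) (p + q - u) :=
        Set.image_const_sub_Icc (p + q) u v
      rw [← himg, ← Set.image_comp]
      exact h3

lemma arc_homeo {X : Type*} [TopologicalSpace X] [T2Space X] (χ : ℝ → X)
    (hc : ContinuousOn χ (Set.Icc 0 1)) (hi : Set.InjOn χ (Set.Icc 0 1)) :
    ∃ e : (Set.Icc (0:ℝ) 1) ≃ₜ (χ '' Set.Icc 0 1), ∀ t, (e t : X) = χ t := by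
  have hcont : Continuous fun t : Set.Icc (0:ℝ) 1 => χ t := hc.restrict
  set f' : Set.Icc (0:ℝ) 1 → (χ '' Set.Icc 0 1) :=
    fun t => ⟨χ t, Set.mem_image_of_mem _ t.2⟩ with hf'
  have hbij : Function.Bijective f' := by
    constructor
    · intro t1 t2 h
      exact Subtype.ext (hi t1.2 t2.2 (congrArg Subtype.val h))
    · rintro ⟨x, t, ht, rfl⟩
      exact ⟨⟨t, ht⟩, rfl⟩
  set e := Equiv.ofBijective f' hbij with he
  have hec : Continuous e := hcont.subtype_mk _
  exact ⟨hec.homeoOfEquivCompactToT2, fun t => rfl⟩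

theorem stmt_8 {X : Type*} [MetricSpace X] [CompactSpace X]
    (f : X → X) (hf : Continuous f)
    (I J K L : Set X) (hI : IsArc I) (hJ : IsArc J) (hK : IsArc K) (hL : IsArc L)
    (hIK : I ⊆ K) (hLJ : L ⊆ J) (hcov : Covers f I J) :
    Covers f K L := by
  classical
  obtain ⟨C, hC, hCI, hfC⟩ := hcov
  obtain ⟨φ, hφc, hφi, hφim⟩ := hC
  obtain ⟨χ, hχc, hχi, hχim⟩ := hJ
  obtain ⟨ψ, hψc, hψi, hψim⟩ := hL
  subst hφim hχim hψim
  set Jset := χ '' Set.Icc 0 1 with hJset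
  set Lset := ψ '' Set.Icc 0 1 with hLset
  obtain ⟨e, he⟩ := arc_homeo χ hχc hχi
  -- the subset of the J-subtype corresponding to L
  set SJ : Set Jset := {x | (x : X) ∈ Lset} with hSJdef
  set incl : Lset → Jset := fun x => ⟨(x : X), hLJ x.2⟩ with hincl
  have hincl_cont : Continuous incl := continuous_subtype_val.subtype_mk _
  have hLconn : IsConnected Lset :=
    (isConnected_Icc (by norm_num : (0:ℝ) ≤ 1)).image ψ hψc
  have hLcomp : IsCompact Lset := isCompact_Icc.image_of_continuousOn hψc
  haveI : ConnectedSpace Lset := Subtype.connectedSpace hLconn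
  haveI : CompactSpace Lset := isCompact_iff_compactSpace.mp hLcomp
  have hSJ : SJ = Set.range incl := by
    ext ⟨x, hx⟩
    constructor
    · intro h; exact ⟨⟨x, h⟩, rfl⟩
    · rintro ⟨⟨y, hy⟩, h⟩
      show x ∈ Lset
      rw [show x = y from (congrArg Subtype.val h).symm]
      exact hy
  have hSJconn : IsConnected SJ := hSJ ▸ isConnected_range hincl_cont
  have hSJcomp : IsCompact SJ := hSJ ▸ isCompact_range hincl_cont
  -- S : the parameters (in [0,1]) of points of L inside J
  set π : Jset → ℝ := fun w => ((e.symm w : Set.Icc (0:ℝ) 1) : ℝ) with hπ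
  have hπc : Continuous π := continuous_subtype_val.comp e.symm.continuous
  set S : Set ℝ := π '' SJ with hSdef
  have hScomp : IsCompact S := hSJcomp.image hπc
  have hSconn : IsConnected S := hSJconn.image π hπc.continuousOn
  have hψ0L : ψ 0 ∈ Lset := Set.mem_image_of_mem ψ (Set.mem_Icc.mpr ⟨le_refl 0, zero_le_one⟩)
  have hSne : S.Nonempty := ⟨π ⟨ψ 0, hLJ hψ0L⟩, ⟨ψ 0, hLJ hψ0L⟩, hψ0L, rfl⟩
  have hSsub : S ⊆ Set.Icc 0 1 := by
    rintro _ ⟨w, hw, rfl⟩; exact (e.symm w).2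
  set a := sInf S with ha'
  set b := sSup S with hb'
  have ha : a ∈ S := hScomp.sInf_mem hSne
  have hb : b ∈ S := hScomp.sSup_mem hSne
  have hS : S = Set.Icc a b :=
    Set.Subset.antisymm
      (fun x hx => ⟨csInf_le hScomp.bddBelow hx, le_csSup hScomp.bddAbove hx⟩)
      (hSconn.isPreconnected.Icc_subset ha hb)
  have hχval : ∀ w : Jset, w ∈ SJ → χ (π w) = (w : X) := by
    intro w hw
    have h1 := he (e.symm w)
    rw [e.apply_symm_apply] at h1
    exact h1.symm
  have hχS : χ '' S = Lset := by
    apply Set.Subset.antisymm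
    · rintro _ ⟨_, ⟨w, hw, rfl⟩, rfl⟩
      rw [hχval w hw]; exact hw
    · intro z hz
      refine ⟨π ⟨z, hLJ hz⟩, ⟨⟨z, hLJ hz⟩, hz, rfl⟩, ?_⟩
      exact hχval ⟨z, hLJ hz⟩ hz
  have hab : a < b := by
    have h01 : (0:ℝ) ∈ Set.Icc (0:ℝ) 1 := Set.mem_Icc.mpr ⟨le_refl 0, zero_le_one⟩
    have h11 : (1:ℝ) ∈ Set.Icc (0:ℝ) 1 := Set.mem_Icc.mpr ⟨zero_le_one, le_refl 1⟩
    have hne : ψ 0 ≠ ψ 1 := fun h => (by norm_num : (0:ℝ) ≠ 1) (hψi h01 h11 h)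
    have hm0 : ψ 0 ∈ χ '' S := hχS.symm ▸ Set.mem_image_of_mem ψ h01
    have hm1 : ψ 1 ∈ χ '' S := hχS.symm ▸ Set.mem_image_of_mem ψ h11
    obtain ⟨x1, hx1, hx1e⟩ := hm0
    obtain ⟨x2, hx2, hx2e⟩ := hm1
    have hx12 : x1 ≠ x2 := fun h => hne (by rw [← hx1e, ← hx2e, h])
    have h1 := hS ▸ hx1
    have h2 := hS ▸ hx2
    rcases lt_or_eq_of_le (h1.1.trans h1.2) with h | h
    · exact h
    · exact absurd (by linarith [h1.1, h1.2, h2.1, h2.2] : x1 = x2) hx12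
  -- the induced map on parameters
  have hgJ : ∀ t : ℝ, t ∈ Set.Icc (0:ℝ) 1 → f (φ t) ∈ Jset := by
    intro t ht
    rw [← hfC]
    exact Set.mem_image_of_mem f (Set.mem_image_of_mem φ ht)
  set gmap : Set.Icc (0:ℝ) 1 → Jset := fun t => ⟨f (φ (t : ℝ)), hgJ _ t.2⟩ with hgmap
  have hgmc : Continuous gmap :=
    Continuous.subtype_mk (hf.comp_continuousOn hφc).restrict _
  set Gsub : Set.Icc (0:ℝ) 1 → Set.Icc (0:ℝ) 1 := fun t => e.symm (gmap t) with hGsub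
  have hGsubc : Continuous Gsub := e.symm.continuous.comp hgmc
  set Gr : ℝ → ℝ := fun t => (Gsub (Set.projIcc 0 1 zero_le_one t) : ℝ) with hGrdef
  have hGrc : Continuous Gr :=
    continuous_subtype_val.comp (hGsubc.comp continuous_projIcc)
  have hGr_eq : ∀ t (ht : t ∈ Set.Icc (0:ℝ) 1), Gr t = (Gsub ⟨t, ht⟩ : ℝ) := by
    intro t ht
    simp only [hGrdef, Set.projIcc_of_mem zero_le_one ht]
  have hval : ∀ t (ht : t ∈ Set.Icc (0:ℝ) 1), f (φ t) = χ (Gr t) := by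
    intro t ht
    rw [hGr_eq t ht]
    have h1 := he (Gsub ⟨t, ht⟩)
    rw [show e (Gsub ⟨t, ht⟩) = gmap ⟨t, ht⟩ from e.apply_symm_apply _] at h1
    exact h1
  -- preimage points for the endpoints of S
  have hpre : ∀ c : ℝ, c ∈ S → ∃ r, r ∈ Set.Icc (0:ℝ) 1 ∧ Gr r = c := by
    intro c hc
    have hcI : c ∈ Set.Icc (0:ℝ) 1 := hSsub hc
    have hχc' : χ c ∈ Jset := Set.mem_image_of_mem χ hcI
    have : χ c ∈ f '' (φ '' Set.Icc 0 1) := by rw [hfC]; exact hχc'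
    obtain ⟨y, ⟨r, hrI, rfl⟩, hyc⟩ := this
    refine ⟨r, hrI, ?_⟩
    rw [hGr_eq r hrI]
    have h1 : gmap ⟨r, hrI⟩ = e ⟨c, hcI⟩ := by
      apply Subtype.ext
      rw [he ⟨c, hcI⟩]
      exact hyc
    show ((e.symm (gmap ⟨r, hrI⟩) : Set.Icc (0:ℝ) 1) : ℝ) = c
    rw [h1, e.symm_apply_apply]
  obtain ⟨p, hpI, hGp⟩ := hpre a ha
  obtain ⟨q, hqI, hGq⟩ := hpre b hb
  obtain ⟨u, v, huv, hsub, himg⟩ := key Gr hGrc hab hGp hGq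
  have huvI : Set.Icc u v ⊆ Set.Icc (0:ℝ) 1 :=
    hsub.trans (Set.uIcc_subset_Icc hpI hqI)
  -- the affine reparametrization
  have haff_img : (fun t : ℝ => u + t * (v - u)) '' Set.Icc 0 1 = Set.Icc u v := by
    ext x
    constructor
    · rintro ⟨t, ht, rfl⟩
      dsimp only
      constructor
      · nlinarith [mul_nonneg ht.1 (sub_nonneg.mpr huv.le)]
      · nlinarith [mul_le_mul_of_nonneg_right ht.2 (sub_nonneg.mpr huv.le)]
    · intro hx
      refine ⟨(x - u) / (v - u), ⟨?_, ?_⟩, ?_⟩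
      · exact div_nonneg (by linarith [hx.1]) (by linarith)
      · rw [div_le_one (by linarith)]
        linarith [hx.2]
      · dsimp only
        rw [div_mul_cancel₀ (x - u) (sub_ne_zero.mpr huv.ne')]; ring
  have haffc : Continuous (fun t : ℝ => u + t * (v - u)) :=
    continuous_const.add (continuous_id.mul continuous_const)
  have hmem : ∀ t : ℝ, t ∈ Set.Icc (0:ℝ) 1 → u + t * (v - u) ∈ Set.Icc (0:ℝ) 1 := by
    intro t ht
    refine huvI ⟨?_, ?_⟩
    · nlinarith [mul_nonneg ht.1 (sub_nonneg.mpr huv.le)]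
    · nlinarith [mul_le_mul_of_nonneg_right ht.2 (sub_nonneg.mpr huv.le)]
  refine ⟨φ '' Set.Icc u v, ?_, ?_, ?_⟩
  · refine ⟨fun t => φ (u + t * (v - u)), ?_, ?_, ?_⟩
    · exact ContinuousOn.comp hφc haffc.continuousOn hmem
    · intro t1 h1 t2 h2 heq
      have := hφi (hmem t1 h1) (hmem t2 h2) heq
      have hvu : v - u ≠ 0 := sub_ne_zero.mpr huv.ne'
      have := add_left_cancel this
      exact mul_right_cancel₀ hvu this
    · rw [← haff_img, Set.image_image]
  · exact fun x hx => hIK (hCI ((Set.image_mono (f := φ) huvI) hx))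
  · rw [Set.image_image]
    have h1 : (fun t => f (φ t)) '' Set.Icc u v = (fun t => χ (Gr t)) '' Set.Icc u v :=
      Set.image_congr (fun t ht => hval t (huvI ht))
    rw [h1, show (fun t => χ (Gr t)) '' Set.Icc u v = χ '' (Gr '' Set.Icc u v) from
      (Set.image_image χ Gr _).symm, himg, ← hS, hχS]
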